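/- If x ≠ y are worlds of the rooted k-contraction of a finite pointed model with b(x) = b(y) = h, then x and y are not h-bisimilar. -/
import Mathlib


/-- A finite pointed Kripke model with modality indices `I` and atoms `P`. -/
structure PModel (I P : Type) where
  W : Type
  fin : Finite W
  R : I → W → W → Prop
  V : P → W → Prop
  d : W

variable {I P : Type}

/-- `h`-bisimilarity between worlds of two models (back-and-forth to depth `h`). -/
def Bisim (M N : PModel I P) : ℕ → M.W → N.W → Prop
  | 0, w, v => ∀ p, M.V p w ↔ N.V p v
  | h+1, w, v => (∀ p, M.V p w ↔ N.V p v)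
      ∧ (∀ i w', M.R i w w' → ∃ v', N.R i v v' ∧ Bisim M N h w' v')
      ∧ (∀ i v', N.R i v v' → ∃ w', M.R i w w' ∧ Bisim M N h w' v')

/-- `k`-bisimilarity of pointed models. -/
def PBisim (k : ℕ) (M N : PModel I P) : Prop := Bisim M N k M.d N.d

/-- Directed paths of length `n`. -/
def Steps (M : PModel I P) : ℕ → M.W → M.W → Prop
  | 0, w, v => w = v
  | n+1, w, v => ∃ u i, M.R i w u ∧ Steps M n u v

/-- Depth of a world: length of a shortest path from the designated world (`⊤` if none). -/
noncomputable def depth (M : PModel I P) (w : M.W) : ℕ∞ :=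
  sInf {n : ℕ∞ | ∃ m : ℕ, n = (m : ℕ∞) ∧ Steps M m M.d w}

/-- Bound `b(w) = k − d(w)`, with `⊥` for unreachable worlds. -/
noncomputable def bound (k : ℕ) (M : PModel I P) (w : M.W) : WithBot ℤ :=
  ENat.recTopCoe (⊥ : WithBot ℤ) (fun n : ℕ => (((k : ℤ) - n : ℤ) : WithBot ℤ)) (depth M w)

/-- The bound as a natural number (meaningful when `0 ≤ bound k M w`). -/
noncomputable def nbound (k : ℕ) (M : PModel I P) (w : M.W) : ℕ :=
  k - (depth M w).toNat
/-- `x` represents `y` : `b(x) ≥ b(y) ≥ 0` and `x ∼_{b(y)} y`. -/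
noncomputable def Repr' (k : ℕ) (M : PModel I P) (x y : M.W) : Prop :=
  0 ≤ bound k M y ∧ bound k M y ≤ bound k M x ∧ Bisim M M (nbound k M y) x y

/-- `x` strictly represents `y`. -/
noncomputable def SRepr (k : ℕ) (M : PModel I P) (x y : M.W) : Prop :=
  Repr' k M x y ∧ bound k M y < bound k M x

/-- Maximal representatives. -/
noncomputable def maxRepr (k : ℕ) (M : PModel I P) : Set M.W :=
  {x | 0 ≤ bound k M x ∧ ∀ y, ¬ SRepr k M y x}

/-- Representative class `[x]_{b(x)}`. -/
noncomputable def reprClass (k : ℕ) (M : PModel I P) (x : M.W) : Set M.W :=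
  {y | Bisim M M (nbound k M x) x y}

lemma depth_d (M : PModel I P) : depth M M.d = 0 := by
  have h0 : (0 : ℕ∞) ∈ {n : ℕ∞ | ∃ m : ℕ, n = (m : ℕ∞) ∧ Steps M m M.d M.d} :=
    ⟨0, by simp, rfl⟩
  have := sInf_le h0
  simpa [depth, le_zero_iff] using this

lemma bound_d (k : ℕ) (M : PModel I P) : bound k M M.d = ((k : ℤ) : WithBot ℤ) := by
  have h := depth_d M
  simp only [bound, h, ENat.recTopCoe_zero]
  norm_num

lemma bound_le (k : ℕ) (M : PModel I P) (w : M.W) : bound k M w ≤ ((k : ℤ) : WithBot ℤ) := by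
  simp only [bound]
  by_cases hd : depth M w = ⊤
  · simp [hd]
  · lift depth M w to ℕ using hd with n hn
    simp only [ENat.recTopCoe_coe]
    exact_mod_cast (by omega : (k : ℤ) - n ≤ (k:ℤ))

lemma d_mem_maxRepr (k : ℕ) (M : PModel I P) : M.d ∈ maxRepr k M := by
  constructor
  · rw [bound_d]; exact_mod_cast Int.ofNat_nonneg k
  · rintro y ⟨_, hlt⟩
    exact absurd (lt_of_lt_of_le hlt (bound_le k M y)) (by rw [bound_d]; exact lt_irrefl _)

/-- Carrier of the rooted k-contraction: representative classes of maximal representatives. -/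
def ContrW (k : ℕ) (M : PModel I P) : Type :=
  {S : Set M.W // ∃ x ∈ maxRepr k M, S = reprClass k M x}

instance (k : ℕ) (M : PModel I P) : Finite (ContrW k M) := by
  have := M.fin
  exact Subtype.finite

/-- The rooted `k`-contraction. -/
noncomputable def rootedContraction (k : ℕ) (M : PModel I P) : PModel I P where
  W := ContrW k M
  fin := inferInstance
  R := fun i S T => ∃ x ∈ maxRepr k M, ∃ y ∈ maxRepr k M,
        S.1 = reprClass k M x ∧ T.1 = reprClass k M y ∧
        0 < bound k M x ∧ ∃ z, M.R i x z ∧ Bisim M M (nbound k M x - 1) y z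
  V := fun p S => ∃ x ∈ maxRepr k M, S.1 = reprClass k M x ∧ M.V p x
  d := ⟨reprClass k M M.d, M.d, d_mem_maxRepr k M, rfl⟩

/-! ### Auxiliary lemmas -/

section Aux

/-- Atoms agree under any level of bisimilarity. -/
lemma bisim_atoms {M N : PModel I P} {n : ℕ} {w : M.W} {v : N.W} (h : Bisim M N n w v) :
    ∀ p, M.V p w ↔ N.V p v := by
  cases n with
  | zero => exact h
  | succ n => exact h.1

lemma bisim_refl (M : PModel I P) : ∀ (n : ℕ) (w : M.W), Bisim M M n w w := by
  intro n
  induction n with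
  | zero => intro w p; exact Iff.rfl
  | succ n ih =>
    intro w
    exact ⟨fun p => Iff.rfl, fun i w' h => ⟨w', h, ih w'⟩, fun i v' h => ⟨v', h, ih v'⟩⟩

lemma bisim_symm {M N : PModel I P} :
    ∀ {n : ℕ} {w : M.W} {v : N.W}, Bisim M N n w v → Bisim N M n v w := by
  intro n
  induction n with
  | zero => intro w v h p; exact (h p).symm
  | succ n ih =>
    intro w v h
    refine ⟨fun p => (h.1 p).symm, ?_, ?_⟩
    · intro i v' hv
      obtain ⟨w', hw, hb⟩ := h.2.2 i v' hv
      exact ⟨w', hw, ih hb⟩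
    · intro i w' hw
      obtain ⟨v', hv, hb⟩ := h.2.1 i w' hw
      exact ⟨v', hv, ih hb⟩

lemma bisim_trans {M N O : PModel I P} :
    ∀ {n : ℕ} {w : M.W} {v : N.W} {u : O.W},
      Bisim M N n w v → Bisim N O n v u → Bisim M O n w u := by
  intro n
  induction n with
  | zero => intro w v u h1 h2 p; exact (h1 p).trans (h2 p)
  | succ n ih =>
    intro w v u h1 h2
    refine ⟨fun p => (h1.1 p).trans (h2.1 p), ?_, ?_⟩
    · intro i w' hw
      obtain ⟨v', hv, hb1⟩ := h1.2.1 i w' hw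
      obtain ⟨u', hu, hb2⟩ := h2.2.1 i v' hv
      exact ⟨u', hu, ih hb1 hb2⟩
    · intro i u' hu
      obtain ⟨v', hv, hb2⟩ := h2.2.2 i u' hu
      obtain ⟨w', hw, hb1⟩ := h1.2.2 i v' hv
      exact ⟨w', hw, ih hb1 hb2⟩

lemma bisim_mono {M N : PModel I P} :
    ∀ {n m : ℕ}, m ≤ n → ∀ {w : M.W} {v : N.W}, Bisim M N n w v → Bisim M N m w v := by
  intro n
  induction n with
  | zero =>
    intro m hm w v h
    obtain rfl : m = 0 := Nat.le_zero.mp hm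
    exact h
  | succ n ih =>
    intro m hm w v h
    cases m with
    | zero => exact bisim_atoms h
    | succ m =>
      refine ⟨h.1, ?_, ?_⟩
      · intro i w' hw
        obtain ⟨v', hv, hb⟩ := h.2.1 i w' hw
        exact ⟨v', hv, ih (Nat.succ_le_succ_iff.mp hm) hb⟩
      · intro i v' hv
        obtain ⟨w', hw, hb⟩ := h.2.2 i v' hv
        exact ⟨w', hw, ih (Nat.succ_le_succ_iff.mp hm) hb⟩

lemma steps_snoc {M : PModel I P} :
    ∀ {m : ℕ} {a b c : M.W} {i : I}, Steps M m a b → M.R i b c → Steps M (m + 1) a c := by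
  intro m
  induction m with
  | zero =>
    intro a b c i hab hbc
    cases hab
    exact ⟨c, i, hbc, rfl⟩
  | succ m ih =>
    intro a b c i hab hbc
    obtain ⟨u, j, hau, hub⟩ := hab
    exact ⟨u, j, hau, ih hub hbc⟩

lemma steps_unsnoc {M : PModel I P} :
    ∀ {m : ℕ} {a c : M.W}, Steps M (m + 1) a c → ∃ (b : M.W) (i : I), Steps M m a b ∧ M.R i b c := by
  intro m
  induction m with
  | zero =>
    intro a c h
    obtain ⟨u, i, hau, hu⟩ := h
    exact ⟨a, i, rfl, hu ▸ hau⟩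
  | succ m ih =>
    intro a c h
    obtain ⟨u, i, hau, hub⟩ := h
    obtain ⟨b, j, hb, hbc⟩ := ih hub
    exact ⟨b, j, ⟨u, i, hau, hb⟩, hbc⟩

lemma depth_le_steps {M : PModel I P} {m : ℕ} {w : M.W} (h : Steps M m M.d w) :
    depth M w ≤ (m : ℕ∞) :=
  sInf_le ⟨m, rfl, h⟩

lemma steps_of_depth {M : PModel I P} {w : M.W} {n : ℕ} (h : depth M w = (n : ℕ∞)) :
    Steps M n M.d w := by
  set A : Set ℕ := {m : ℕ | Steps M m M.d w} with hA
  have hAne : A.Nonempty := by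
    by_contra hne
    have hD : {n : ℕ∞ | ∃ m : ℕ, n = (m : ℕ∞) ∧ Steps M m M.d w} = ∅ := by
      ext t
      simp only [Set.mem_setOf_eq, Set.mem_empty_iff_false, iff_false]
      rintro ⟨m, rfl, hm⟩
      exact hne ⟨m, hm⟩
    rw [depth, hD, sInf_empty] at h
    exact (by simp : ((n : ℕ∞) ≠ ⊤)) h.symm
  have hmem : ((sInf A : ℕ) : ℕ∞) ∈ {n : ℕ∞ | ∃ m : ℕ, n = (m : ℕ∞) ∧ Steps M m M.d w} :=
    ⟨sInf A, rfl, Nat.sInf_mem hAne⟩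
  have h1 : depth M w ≤ ((sInf A : ℕ) : ℕ∞) := sInf_le hmem
  have h2 : ((sInf A : ℕ) : ℕ∞) ≤ depth M w := by
    apply le_sInf
    rintro b ⟨m, rfl, hm⟩
    exact_mod_cast Nat.sInf_le hm
  have : ((sInf A : ℕ) : ℕ∞) = (n : ℕ∞) :=
    le_antisymm (by rw [← h]; exact h2) (by rw [← h]; exact h1)
  have hn : sInf A = n := by exact_mod_cast this
  exact hn ▸ Nat.sInf_mem hAne

lemma depth_succ_le {M : PModel I P} {i : I} {w z : M.W} (h : M.R i w z) :
    depth M z ≤ depth M w + 1 := by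
  by_cases hd : depth M w = ⊤
  · simp [hd]
  · lift depth M w to ℕ using hd with n hn
    have hst : Steps M n M.d w := steps_of_depth hn.symm
    have := depth_le_steps (steps_snoc hst h)
    calc depth M z ≤ ((n + 1 : ℕ) : ℕ∞) := this
      _ = (n : ℕ∞) + 1 := by push_cast; ring

/-- Extraction of the numeric data of a nonnegative bound. -/
lemma bound_spec {k : ℕ} {M : PModel I P} {w : M.W} (h : 0 ≤ bound k M w) :
    ∃ n : ℕ, n ≤ k ∧ depth M w = (n : ℕ∞) ∧
      bound k M w = (((k : ℤ) - n : ℤ) : WithBot ℤ) ∧ nbound k M w = k - n := by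
  by_cases hd : depth M w = ⊤
  · rw [bound, hd] at h
    simp at h
  · lift depth M w to ℕ using hd with n hn
    refine ⟨n, ?_, rfl, ?_, ?_⟩
    · rw [bound, ← hn] at h
      simp only [ENat.recTopCoe_coe] at h
      have : (0 : ℤ) ≤ (k : ℤ) - n := by exact_mod_cast h
      omega
    · rw [bound, ← hn]
      simp
    · rw [nbound, ← hn]
      simp

lemma nbound_eq_of_bound_eq {k : ℕ} {M : PModel I P} {w v : M.W}
    (hw : 0 ≤ bound k M w) (h : bound k M w = bound k M v) :
    nbound k M w = nbound k M v := by
  obtain ⟨a, hak, _, hba, hna⟩ := bound_spec hw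
  obtain ⟨b, hbk, _, hbb, hnb⟩ := bound_spec (h ▸ hw)
  rw [hba, hbb] at h
  have : (k : ℤ) - a = (k : ℤ) - b := by exact_mod_cast h
  omega

lemma mem_reprClass_iff {k : ℕ} {M : PModel I P} {x y : M.W} :
    y ∈ reprClass k M x ↔ Bisim M M (nbound k M x) x y := Iff.rfl

lemma reprClass_eq_of {k : ℕ} {M : PModel I P} {x y : M.W}
    (hn : nbound k M x = nbound k M y) (hb : Bisim M M (nbound k M x) x y) :
    reprClass k M x = reprClass k M y := by
  ext w
  simp only [mem_reprClass_iff]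
  constructor
  · intro hw
    rw [← hn]
    exact bisim_trans (bisim_symm hb) hw
  · intro hw
    rw [← hn] at hw
    exact bisim_trans hb hw

lemma max_not_lt {k : ℕ} {M : PModel I P} {x y : M.W} (hx : x ∈ maxRepr k M)
    (hb : Bisim M M (nbound k M x) y x) : ¬ bound k M x < bound k M y :=
  fun hlt => hx.2 y ⟨⟨hx.1, hlt.le, hb⟩, hlt⟩

/-- Maximal representatives of the same class have equal bound and are mutually bisimilar. -/
lemma class_eq_data {k : ℕ} {M : PModel I P} {x y : M.W} (hx : x ∈ maxRepr k M)
    (hy : y ∈ maxRepr k M) (h : reprClass k M x = reprClass k M y) :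
    bound k M x = bound k M y ∧ Bisim M M (nbound k M x) x y := by
  have hxy : Bisim M M (nbound k M x) x y := by
    have : y ∈ reprClass k M x := h ▸ (bisim_refl M _ y : y ∈ reprClass k M y)
    exact this
  have hyx : Bisim M M (nbound k M y) y x := by
    have : x ∈ reprClass k M y := h ▸ (bisim_refl M _ x : x ∈ reprClass k M x)
    exact this
  refine ⟨le_antisymm ?_ ?_, hxy⟩
  · exact not_lt.mp (max_not_lt hy (bisim_symm hyx))
  · exact not_lt.mp (max_not_lt hx (bisim_symm hxy))

/-- Key consequence of maximality: the target representative of a contraction edge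
has bound at least the bound of the source minus one. -/
lemma target_nbound {k : ℕ} {M : PModel I P} {i : I} {x' y' z : M.W}
    (hx' : x' ∈ maxRepr k M) (hy' : y' ∈ maxRepr k M) (hpos : 0 < bound k M x')
    (hz : M.R i x' z) (hb : Bisim M M (nbound k M x' - 1) y' z) :
    nbound k M x' - 1 ≤ nbound k M y' := by
  obtain ⟨a, hak, hda, hba, hna⟩ := bound_spec hpos.le
  have hapos : a < k := by
    rw [hba] at hpos
    have : (0 : ℤ) < (k : ℤ) - a := by exact_mod_cast hpos
    omega
  -- depth of z
  have hdz : depth M z ≤ ((a + 1 : ℕ) : ℕ∞) := by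
    calc depth M z ≤ depth M x' + 1 := depth_succ_le hz
      _ = ((a + 1 : ℕ) : ℕ∞) := by rw [hda]; push_cast; ring
  have hdz' : depth M z ≠ ⊤ := ne_top_of_le_ne_top (ENat.coe_ne_top _) hdz
  lift depth M z to ℕ using hdz' with c hc
  have hca : c ≤ a + 1 := by exact_mod_cast hdz
  have hbz : bound k M z = (((k : ℤ) - c : ℤ) : WithBot ℤ) := by
    rw [bound, ← hc]; simp
  have h0z : 0 ≤ bound k M z := by
    rw [hbz]
    exact_mod_cast (by omega : (0:ℤ) ≤ (k:ℤ) - c)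
  obtain ⟨b, hbk, hdb, hbb, hnb⟩ := bound_spec hy'.1
  rw [hna, hnb]
  by_contra hcon
  push_neg at hcon
  -- then b > a + 1 ≥ c, i.e. bound y' < bound z and nbound y' < nbound x' - 1
  have hb1 : a + 1 < b := by omega
  have hmono : Bisim M M (nbound k M y') y' z := by
    refine bisim_mono ?_ hb
    rw [hna, hnb]; omega
  have := max_not_lt hy' (bisim_symm hmono)
  apply this
  rw [hbb, hbz]
  exact_mod_cast (by omega : (k:ℤ) - b < (k:ℤ) - c)

/-- Every world of nonnegative bound has a maximal representative. -/
lemma exists_maxRepr_aux {k : ℕ} {M : PModel I P} :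
    ∀ (fuel : ℕ) (w : M.W), 0 ≤ bound k M w → k ≤ nbound k M w + fuel →
      ∃ y, y ∈ maxRepr k M ∧ bound k M w ≤ bound k M y ∧ Bisim M M (nbound k M w) y w := by
  intro fuel
  induction fuel with
  | zero =>
    intro w h0 hf
    obtain ⟨n, hnk, _, hbn, hnn⟩ := bound_spec h0
    have hn0 : n = 0 := by omega
    have hmax : w ∈ maxRepr k M := by
      refine ⟨h0, fun y hy => ?_⟩
      have h1 : bound k M w < bound k M y := hy.2
      have h2 : bound k M y ≤ ((k : ℤ) : WithBot ℤ) := bound_le k M y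
      rw [hbn, hn0] at h1
      simp only [Nat.cast_zero, sub_zero] at h1
      exact absurd (lt_of_lt_of_le h1 h2) (lt_irrefl _)
    exact ⟨w, hmax, le_refl _, bisim_refl M _ w⟩
  | succ fuel ih =>
    intro w h0 hf
    by_cases hw : w ∈ maxRepr k M
    · exact ⟨w, hw, le_refl _, bisim_refl M _ w⟩
    · have hex : ∃ y, SRepr k M y w := by
        simp only [maxRepr, Set.mem_setOf_eq, not_and, not_forall, not_not] at hw
        exact hw h0
      obtain ⟨y₀, ⟨⟨_, hle, hb⟩, hlt⟩⟩ := hex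
      have h0y : 0 ≤ bound k M y₀ := le_trans h0 hle
      obtain ⟨n, hnk, _, hbn, hnn⟩ := bound_spec h0
      obtain ⟨m, hmk, _, hbm, hnm⟩ := bound_spec h0y
      have hmn : m < n := by
        rw [hbn, hbm] at hlt
        have : (k : ℤ) - n < (k : ℤ) - m := by exact_mod_cast hlt
        omega
      obtain ⟨y, hy, hley, hby⟩ := ih y₀ h0y (by omega)
      refine ⟨y, hy, le_trans hle hley, ?_⟩
      refine bisim_trans (bisim_mono ?_ hby) hb
      rw [hnn, hnm]; omega

lemma exists_maxRepr {k : ℕ} {M : PModel I P} (w : M.W) (h0 : 0 ≤ bound k M w) :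
    ∃ y, y ∈ maxRepr k M ∧ bound k M w ≤ bound k M y ∧ Bisim M M (nbound k M w) y w :=
  exists_maxRepr_aux k w h0 (by omega)

/-- Atoms of a contraction world agree with atoms of any of its maximal representatives. -/
lemma contr_atoms {k : ℕ} {M : PModel I P} {S : (rootedContraction k M).W} {x : M.W}
    (hx : x ∈ maxRepr k M) (hS : S.1 = reprClass k M x) :
    ∀ p, (rootedContraction k M).V p S ↔ M.V p x := by
  intro p
  constructor
  · intro hV
    obtain ⟨x'', hx'', hS'', hVp⟩ :
        ∃ x'' ∈ maxRepr k M, S.1 = reprClass k M x'' ∧ M.V p x'' := hV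
    have hcl : reprClass k M x = reprClass k M x'' := by rw [← hS, hS'']
    have hb : Bisim M M (nbound k M x) x x'' := (class_eq_data hx hx'' hcl).2
    exact (bisim_atoms hb p).mpr hVp
  · intro hV
    exact ⟨x, hx, hS, hV⟩

/-- Each world of the contraction is `n`-bisimilar to its maximal representative,
for every `n` up to the representative's bound. -/
lemma contr_bisim {k : ℕ} {M : PModel I P} :
    ∀ (n : ℕ) (S : (rootedContraction k M).W) (x : M.W), x ∈ maxRepr k M →
      S.1 = reprClass k M x → n ≤ nbound k M x → Bisim (rootedContraction k M) M n S x := by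
  intro n
  induction n with
  | zero => intro S x hx hS _; exact contr_atoms hx hS
  | succ n ih =>
    intro S x hx hS hn
    refine ⟨contr_atoms hx hS, ?_, ?_⟩
    · -- forth: a step in the contraction
      intro i T hR
      obtain ⟨x', hx', y', hy', hS', hT', hpos, z, hz, hbz⟩ :
          ∃ x' ∈ maxRepr k M, ∃ y' ∈ maxRepr k M,
            S.1 = reprClass k M x' ∧ T.1 = reprClass k M y' ∧
            0 < bound k M x' ∧ ∃ z, M.R i x' z ∧ Bisim M M (nbound k M x' - 1) y' z := hR
      have hcl : reprClass k M x = reprClass k M x' := by rw [← hS, hS']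
      obtain ⟨hbeq, hbxx'⟩ := class_eq_data hx hx' hcl
      have hneq : nbound k M x = nbound k M x' := nbound_eq_of_bound_eq hx.1 hbeq
      have hnpos : 1 ≤ nbound k M x' := by
        obtain ⟨a, hak, _, hba, hna⟩ := bound_spec hpos.le
        rw [hba] at hpos
        have : (0:ℤ) < (k:ℤ) - a := by exact_mod_cast hpos
        omega
      -- use the back clause of `Bisim (nbound x) x x'` on the successor z of x'
      obtain ⟨m', hm'⟩ : ∃ m', nbound k M x = m' + 1 := ⟨nbound k M x - 1, by omega⟩
      rw [hm'] at hbxx'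
      obtain ⟨v', hv', hbv'⟩ := hbxx'.2.2 i z hz
      have hm'' : m' = nbound k M x' - 1 := by omega
      rw [hm''] at hbv'
      have hy'v' : Bisim M M (nbound k M x' - 1) y' v' := bisim_trans hbz (bisim_symm hbv')
      have htar : nbound k M x' - 1 ≤ nbound k M y' := target_nbound hx' hy' hpos hz hbz
      have hnle : n ≤ nbound k M y' := by omega
      refine ⟨v', hv', bisim_trans (ih T y' hy' hT' hnle) (bisim_mono (by omega) hy'v')⟩
    · -- back: a step in the original model
      intro i v' hv'
      obtain ⟨a, hak, hda, hba, hna⟩ := bound_spec hx.1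
      have hax : a + n + 1 ≤ k := by omega
      have hpos : 0 < bound k M x := by
        rw [hba]
        exact_mod_cast (by omega : (0:ℤ) < (k:ℤ) - a)
      have hdv : depth M v' ≤ ((a + 1 : ℕ) : ℕ∞) := by
        calc depth M v' ≤ depth M x + 1 := depth_succ_le hv'
          _ = ((a + 1 : ℕ) : ℕ∞) := by rw [hda]; push_cast; ring
      have hdv' : depth M v' ≠ ⊤ := ne_top_of_le_ne_top (ENat.coe_ne_top _) hdv
      lift depth M v' to ℕ using hdv' with c hc
      have hca : c ≤ a + 1 := by exact_mod_cast hdv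
      have hbv : bound k M v' = (((k : ℤ) - c : ℤ) : WithBot ℤ) := by
        rw [bound, ← hc]; simp
      have hnv : nbound k M v' = k - c := by rw [nbound, ← hc]; simp
      have h0v : 0 ≤ bound k M v' := by
        rw [hbv]
        exact_mod_cast (by omega : (0:ℤ) ≤ (k:ℤ) - c)
      obtain ⟨y', hy', hley', hby'⟩ := exists_maxRepr v' h0v
      obtain ⟨b, hbk, _, hbb, hnb⟩ := bound_spec hy'.1
      have hbc : b ≤ c := by
        rw [hbv, hbb] at hley'
        have : (k:ℤ) - c ≤ (k:ℤ) - b := by exact_mod_cast hley'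
        omega
      refine ⟨⟨reprClass k M y', y', hy', rfl⟩, ?_, ?_⟩
      · exact ⟨x, hx, y', hy', hS, rfl, hpos, v', hv',
          bisim_mono (by rw [hna, hnv]; omega) hby'⟩
      · refine bisim_trans (ih _ y' hy' rfl (by rw [hnb]; omega))
          (bisim_mono (by rw [hnv]; omega) hby')

/-- Projection: along a path of length `m` in the contraction, the bound of
maximal representatives decreases by at most `m`. -/
lemma contr_project {k : ℕ} {M : PModel I P} :
    ∀ (m : ℕ) (S T : (rootedContraction k M).W), Steps (rootedContraction k M) m S T →
      ∀ x y, x ∈ maxRepr k M → y ∈ maxRepr k M → S.1 = reprClass k M x →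
        T.1 = reprClass k M y → nbound k M x ≤ nbound k M y + m := by
  intro m
  induction m with
  | zero =>
    intro S T hst x y hx hy hSx hTy
    cases hst
    have hcl : reprClass k M x = reprClass k M y := by rw [← hSx, hTy]
    have := nbound_eq_of_bound_eq hx.1 (class_eq_data hx hy hcl).1
    omega
  | succ m ih =>
    intro S T hst x y hx hy hSx hTy
    obtain ⟨U, i, hSU, hUT⟩ : ∃ U i, (rootedContraction k M).R i S U ∧
        Steps (rootedContraction k M) m U T := hst
    obtain ⟨x', hx', y', hy', hS', hU', hpos, z, hz, hbz⟩ :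
        ∃ x' ∈ maxRepr k M, ∃ y' ∈ maxRepr k M,
          S.1 = reprClass k M x' ∧ U.1 = reprClass k M y' ∧
          0 < bound k M x' ∧ ∃ z, M.R i x' z ∧ Bisim M M (nbound k M x' - 1) y' z := hSU
    have hcl : reprClass k M x = reprClass k M x' := by rw [← hSx, hS']
    have hneq : nbound k M x = nbound k M x' :=
      nbound_eq_of_bound_eq hx.1 (class_eq_data hx hx' hcl).1
    have htar : nbound k M x' - 1 ≤ nbound k M y' := target_nbound hx' hy' hpos hz hbz
    have hnpos : 1 ≤ nbound k M x' := by
      obtain ⟨a, hak, _, hba, hna⟩ := bound_spec hpos.le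
      rw [hba] at hpos
      have : (0:ℤ) < (k:ℤ) - a := by exact_mod_cast hpos
      omega
    have := ih U T hUT y' y hy' hy hU' hTy
    omega

/-- Lifting: a path of length `m ≤ k` in the model lifts to a path in the contraction,
ending at a class whose representative is `(k-m)`-bisimilar to the endpoint. -/
lemma contr_lift {k : ℕ} {M : PModel I P} :
    ∀ (m : ℕ), m ≤ k → ∀ (w : M.W), Steps M m M.d w →
      ∃ (y : M.W) (T : (rootedContraction k M).W), y ∈ maxRepr k M ∧
        T.1 = reprClass k M y ∧ Bisim M M (k - m) y w ∧
        (((k : ℤ) - m : ℤ) : WithBot ℤ) ≤ bound k M y ∧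
        Steps (rootedContraction k M) m (rootedContraction k M).d T := by
  intro m
  induction m with
  | zero =>
    intro _ w hw
    cases hw
    exact ⟨M.d, (rootedContraction k M).d, d_mem_maxRepr k M, rfl,
      bisim_refl M _ M.d, by rw [bound_d]; exact_mod_cast (by omega : (k:ℤ) - 0 ≤ (k:ℤ)), rfl⟩
  | succ m ih =>
    intro hmk w hw
    obtain ⟨v, i, hv, hvw⟩ := steps_unsnoc hw
    obtain ⟨y, T, hy, hT, hbyv, hbdy, hsteps⟩ := ih (by omega) v hv
    obtain ⟨b, hbk, hdb, hbb, hnb⟩ := bound_spec hy.1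
    have hbm : b ≤ m := by
      rw [hbb] at hbdy
      have : (k:ℤ) - m ≤ (k:ℤ) - b := by exact_mod_cast hbdy
      omega
    have hpos : 0 < bound k M y := by
      rw [hbb]
      exact_mod_cast (by omega : (0:ℤ) < (k:ℤ) - b)
    -- take the successor step inside `Bisim (k-m) y v`
    obtain ⟨m', hm'⟩ : ∃ m', k - m = m' + 1 := ⟨k - m - 1, by omega⟩
    rw [hm'] at hbyv
    obtain ⟨z, hz, hbzw⟩ := hbyv.2.2 i w hvw
    -- data of z
    have hdz : depth M z ≤ ((b + 1 : ℕ) : ℕ∞) := by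
      calc depth M z ≤ depth M y + 1 := depth_succ_le hz
        _ = ((b + 1 : ℕ) : ℕ∞) := by rw [hdb]; push_cast; ring
    have hdz' : depth M z ≠ ⊤ := ne_top_of_le_ne_top (ENat.coe_ne_top _) hdz
    lift depth M z to ℕ using hdz' with c hc
    have hcb : c ≤ b + 1 := by exact_mod_cast hdz
    have hbz : bound k M z = (((k : ℤ) - c : ℤ) : WithBot ℤ) := by rw [bound, ← hc]; simp
    have hnz : nbound k M z = k - c := by rw [nbound, ← hc]; simp
    have h0z : 0 ≤ bound k M z := by
      rw [hbz]
      exact_mod_cast (by omega : (0:ℤ) ≤ (k:ℤ) - c)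
    obtain ⟨y'', hy'', hlez, hbz'⟩ := exists_maxRepr z h0z
    obtain ⟨e, hek, _, hbe, hne⟩ := bound_spec hy''.1
    have hec : e ≤ c := by
      rw [hbz, hbe] at hlez
      have : (k:ℤ) - c ≤ (k:ℤ) - e := by exact_mod_cast hlez
      omega
    refine ⟨y'', ⟨reprClass k M y'', y'', hy'', rfl⟩, hy'', rfl, ?_, ?_, ?_⟩
    · -- Bisim (k - (m+1)) y'' w
      have h1 : Bisim M M (k - (m + 1)) y'' z :=
        bisim_mono (by rw [hnz]; omega) hbz'
      have h2 : Bisim M M (k - (m + 1)) z w := by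
        refine bisim_mono ?_ hbzw
        omega
      exact bisim_trans h1 h2
    · rw [hbe]
      exact_mod_cast (by omega : (k:ℤ) - (m+1 : ℕ) ≤ (k:ℤ) - e)
    · refine steps_snoc hsteps (i := i) ?_
      exact ⟨y, hy, y'', hy'', hT, rfl, hpos, z, hz,
        bisim_mono (by rw [hnb, hnz]; omega) hbz'⟩

end Aux

/-- Distinct worlds of the rooted `k`-contraction of equal bound `h` are not
`h`-bisimilar. -/
theorem contraction_distinct_not_bisim (k h : ℕ) (M : PModel I P)
    (S T : (rootedContraction k M).W) (hST : S ≠ T)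
    (hS : bound k (rootedContraction k M) S = ((h : ℤ) : WithBot ℤ))
    (hT : bound k (rootedContraction k M) T = ((h : ℤ) : WithBot ℤ)) :
    ¬ Bisim (rootedContraction k M) (rootedContraction k M) h S T := by
  intro hbis
  obtain ⟨x, hx, hSx⟩ := S.2
  obtain ⟨y, hy, hTy⟩ := T.2
  -- numeric data of the contraction bounds
  have h0S : 0 ≤ bound k (rootedContraction k M) S := by
    rw [hS]; exact_mod_cast Int.natCast_nonneg h
  have h0T : 0 ≤ bound k (rootedContraction k M) T := by
    rw [hT]; exact_mod_cast Int.natCast_nonneg h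
  obtain ⟨nS, hnSk, hdS, hbS, _⟩ := bound_spec h0S
  obtain ⟨nT, hnTk, hdT, hbT, _⟩ := bound_spec h0T
  have hnS : nS = k - h ∧ h ≤ k := by
    rw [hS] at hbS
    have : (h : ℤ) = (k : ℤ) - nS := by exact_mod_cast hbS
    omega
  have hnT : nT = k - h := by
    rw [hT] at hbT
    have : (h : ℤ) = (k : ℤ) - nT := by exact_mod_cast hbT
    omega
  have hnbd : nbound k M M.d = k := by rw [nbound, depth_d]; simp
  -- bound of x in M equals h
  obtain ⟨a, hak, hdx, hbx, hnx⟩ := bound_spec hx.1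
  have hprojS : nbound k M M.d ≤ nbound k M x + nS :=
    contr_project nS _ S (steps_of_depth hdS) M.d x (d_mem_maxRepr k M) hx rfl hSx
  have hah : a + h ≤ k := by omega
  obtain ⟨y₁, T₁, hy₁, hT₁, hb₁, hbd₁, hsteps₁⟩ := contr_lift a hak x (steps_of_depth hdx)
  have hb1' : Bisim M M (nbound k M x) y₁ x := by rw [hnx]; exact hb₁
  have hble : bound k M x ≤ bound k M y₁ := hbx ▸ hbd₁
  have hbeq : bound k M y₁ = bound k M x :=
    le_antisymm (not_lt.mp (max_not_lt hx hb1')) hble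
  have hneq : nbound k M y₁ = nbound k M x := nbound_eq_of_bound_eq hy₁.1 hbeq
  have hcls : reprClass k M y₁ = reprClass k M x :=
    reprClass_eq_of (by rw [hneq]) (by rw [hneq]; exact hb1')
  have hT₁S : T₁ = S := Subtype.ext (by rw [hT₁, hcls, ← hSx])
  have hdle : depth (rootedContraction k M) S ≤ (a : ℕ∞) := hT₁S ▸ depth_le_steps hsteps₁
  have hge : nS ≤ a := by rw [hdS] at hdle; exact_mod_cast hdle
  have hnxh : nbound k M x = h := by omega
  -- bound of y in M equals h
  obtain ⟨b, hbk, hdy, hby, hny⟩ := bound_spec hy.1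
  have hprojT : nbound k M M.d ≤ nbound k M y + nT :=
    contr_project nT _ T (steps_of_depth hdT) M.d y (d_mem_maxRepr k M) hy rfl hTy
  have hbh : b + h ≤ k := by omega
  obtain ⟨y₂, T₂, hy₂, hT₂, hb₂, hbd₂, hsteps₂⟩ := contr_lift b hbk y (steps_of_depth hdy)
  have hb2' : Bisim M M (nbound k M y) y₂ y := by rw [hny]; exact hb₂
  have hble2 : bound k M y ≤ bound k M y₂ := hby ▸ hbd₂
  have hbeq2 : bound k M y₂ = bound k M y :=
    le_antisymm (not_lt.mp (max_not_lt hy hb2')) hble2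
  have hneq2 : nbound k M y₂ = nbound k M y := nbound_eq_of_bound_eq hy₂.1 hbeq2
  have hcls2 : reprClass k M y₂ = reprClass k M y :=
    reprClass_eq_of (by rw [hneq2]) (by rw [hneq2]; exact hb2')
  have hT₂T : T₂ = T := Subtype.ext (by rw [hT₂, hcls2, ← hTy])
  have hdle2 : depth (rootedContraction k M) T ≤ (b : ℕ∞) := hT₂T ▸ depth_le_steps hsteps₂
  have hge2 : nT ≤ b := by rw [hdT] at hdle2; exact_mod_cast hdle2
  have hnyh : nbound k M y = h := by omega
  -- transfer the bisimulation to the maximal representatives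
  have BS : Bisim (rootedContraction k M) M h S x := contr_bisim h S x hx hSx (by omega)
  have BT : Bisim (rootedContraction k M) M h T y := contr_bisim h T y hy hTy (by omega)
  have hxy : Bisim M M h x y := bisim_trans (bisim_trans (bisim_symm BS) hbis) BT
  have hfin : reprClass k M x = reprClass k M y :=
    reprClass_eq_of (by omega) (by rw [hnxh]; exact hxy)
  exact hST (Subtype.ext (by rw [hSx, hfin, ← hTy]))
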